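/- Let f : ℝ → ℝ be defined by f(θ) = 2 + cos θ · log((1 − cos θ)/(1 + cos θ)). Then for every θ ∈ (0, π) the function f is twice differentiable at θ and satisfies sin θ · f''(θ) + cos θ · f'(θ) + 2 sin θ · f(θ) = 0 (equivalently, (sin θ · f'(θ))' + 2 sin θ · f(θ) = 0), and moreover f'(π/2) = 0. -/

import Mathlib

open Real

private lemma cos_bounds {θ : ℝ} (h : θ ∈ Set.Ioo (0:ℝ) Real.pi) :
    0 < 1 - Real.cos θ ∧ 0 < 1 + Real.cos θ ∧ 0 < Real.sin θ := by
  have h3 : 0 < Real.sin θ := Real.sin_pos_of_pos_of_lt_pi h.1 h.2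
  have hp := Real.sin_sq_add_cos_sq θ
  refine ⟨by nlinarith, by nlinarith, h3⟩

private lemma hasDerivAt_L {θ : ℝ} (h1 : (1:ℝ) - Real.cos θ ≠ 0)
    (h2 : (1:ℝ) + Real.cos θ ≠ 0) :
    HasDerivAt (fun x => Real.log (1 - Real.cos x) - Real.log (1 + Real.cos x))
      (Real.sin θ / (1 - Real.cos θ) + Real.sin θ / (1 + Real.cos θ)) θ := by
  have hA : HasDerivAt (fun x => (1:ℝ) - Real.cos x) (Real.sin θ) θ := by
    simpa using (hasDerivAt_const θ (1:ℝ)).fun_sub (Real.hasDerivAt_cos θ)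
  have hB : HasDerivAt (fun x => (1:ℝ) + Real.cos x) (-Real.sin θ) θ := by
    simpa using (hasDerivAt_const θ (1:ℝ)).fun_add (Real.hasDerivAt_cos θ)
  have := (hA.log h1).fun_sub (hB.log h2)
  refine this.congr_deriv ?_
  field_simp
  ring

private lemma hasDerivAt_F {θ : ℝ} (h1 : (1:ℝ) - Real.cos θ ≠ 0)
    (h2 : (1:ℝ) + Real.cos θ ≠ 0) :
    HasDerivAt (fun x => 2 + Real.cos x *
        (Real.log (1 - Real.cos x) - Real.log (1 + Real.cos x)))
      (-Real.sin θ * (Real.log (1 - Real.cos θ) - Real.log (1 + Real.cos θ))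
        + Real.cos θ * (Real.sin θ / (1 - Real.cos θ) + Real.sin θ / (1 + Real.cos θ))) θ := by
  have := (hasDerivAt_const θ (2:ℝ)).fun_add
    ((Real.hasDerivAt_cos θ).fun_mul (hasDerivAt_L h1 h2))
  refine this.congr_deriv ?_
  ring

theorem stmt_16 (f : ℝ → ℝ)
    (hf : ∀ θ, f θ = 2 + Real.cos θ * Real.log ((1 - Real.cos θ) / (1 + Real.cos θ))) :
    (∀ θ ∈ Set.Ioo (0 : ℝ) Real.pi,
      DifferentiableAt ℝ f θ ∧ DifferentiableAt ℝ (deriv f) θ ∧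
      Real.sin θ * deriv (deriv f) θ + Real.cos θ * deriv f θ
        + 2 * Real.sin θ * f θ = 0) ∧
    deriv f (Real.pi / 2) = 0 := by
  set Φ : ℝ → ℝ := fun x =>
    -Real.sin x * (Real.log (1 - Real.cos x) - Real.log (1 + Real.cos x))
      + 2 * Real.cos x / Real.sin x with hΦ
  -- first derivative
  have claimA : ∀ θ ∈ Set.Ioo (0:ℝ) Real.pi, HasDerivAt f (Φ θ) θ := by
    intro θ hθ
    obtain ⟨b1, b2, b3⟩ := cos_bounds hθ
    have hev : f =ᶠ[nhds θ] fun x => 2 + Real.cos x *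
        (Real.log (1 - Real.cos x) - Real.log (1 + Real.cos x)) := by
      filter_upwards [Ioo_mem_nhds hθ.1 hθ.2] with x hx
      obtain ⟨c1, c2, _⟩ := cos_bounds hx
      rw [hf x, Real.log_div (ne_of_gt c1) (ne_of_gt c2)]
    have hF := hasDerivAt_F (ne_of_gt b1) (ne_of_gt b2)
    have : HasDerivAt f
        (-Real.sin θ * (Real.log (1 - Real.cos θ) - Real.log (1 + Real.cos θ))
          + Real.cos θ * (Real.sin θ / (1 - Real.cos θ) + Real.sin θ / (1 + Real.cos θ))) θ :=
      hF.congr_of_eventuallyEq hev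
    convert this using 1
    rw [hΦ]
    have hp := Real.sin_sq_add_cos_sq θ
    field_simp
    nlinarith [hp]
  -- second derivative of Φ
  have claimB : ∀ θ ∈ Set.Ioo (0:ℝ) Real.pi, HasDerivAt Φ
      (-Real.cos θ * (Real.log (1 - Real.cos θ) - Real.log (1 + Real.cos θ))
        - Real.sin θ * (Real.sin θ / (1 - Real.cos θ) + Real.sin θ / (1 + Real.cos θ))
        + (2 * (-Real.sin θ) * Real.sin θ - 2 * Real.cos θ * Real.cos θ) / Real.sin θ ^ 2) θ := by
    intro θ hθ
    obtain ⟨b1, b2, b3⟩ := cos_bounds hθ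
    have hT1 : HasDerivAt (fun x => -Real.sin x *
        (Real.log (1 - Real.cos x) - Real.log (1 + Real.cos x)))
        (-Real.cos θ * (Real.log (1 - Real.cos θ) - Real.log (1 + Real.cos θ))
          + -Real.sin θ * (Real.sin θ / (1 - Real.cos θ) + Real.sin θ / (1 + Real.cos θ))) θ :=
      ((Real.hasDerivAt_sin θ).neg).mul (hasDerivAt_L (ne_of_gt b1) (ne_of_gt b2))
    have hT2 : HasDerivAt (fun x => 2 * Real.cos x / Real.sin x)
        ((2 * (-Real.sin θ) * Real.sin θ - 2 * Real.cos θ * Real.cos θ) / Real.sin θ ^ 2) θ := by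
      have hnum : HasDerivAt (fun x => 2 * Real.cos x) (2 * (-Real.sin θ)) θ := by
        simpa using (Real.hasDerivAt_cos θ).const_mul (2:ℝ)
      have := hnum.fun_div (Real.hasDerivAt_sin θ) (ne_of_gt b3)
      convert this using 1
    have := hT1.fun_add hT2
    refine this.congr_deriv ?_
    ring
  refine ⟨fun θ hθ => ?_, ?_⟩
  · obtain ⟨b1, b2, b3⟩ := cos_bounds hθ
    have hD1 := claimA θ hθ
    have hev2 : deriv f =ᶠ[nhds θ] Φ := by
      filter_upwards [Ioo_mem_nhds hθ.1 hθ.2] with x hx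
      exact (claimA x hx).deriv
    have hD2 : HasDerivAt (deriv f)
        (-Real.cos θ * (Real.log (1 - Real.cos θ) - Real.log (1 + Real.cos θ))
          - Real.sin θ * (Real.sin θ / (1 - Real.cos θ) + Real.sin θ / (1 + Real.cos θ))
          + (2 * (-Real.sin θ) * Real.sin θ - 2 * Real.cos θ * Real.cos θ) / Real.sin θ ^ 2) θ :=
      (claimB θ hθ).congr_of_eventuallyEq hev2
    refine ⟨hD1.differentiableAt, hD2.differentiableAt, ?_⟩
    rw [hD1.deriv, hD2.deriv, hf θ, Real.log_div (ne_of_gt b1) (ne_of_gt b2), hΦ]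
    have hp := Real.sin_sq_add_cos_sq θ
    have e1 : Real.sin θ / (1 - Real.cos θ) + Real.sin θ / (1 + Real.cos θ)
        = 2 / Real.sin θ := by
      field_simp
      linear_combination 2 * hp
    rw [e1]
    field_simp
    ring_nf
  · have hmem : Real.pi / 2 ∈ Set.Ioo (0:ℝ) Real.pi := by
      constructor <;> nlinarith [Real.pi_pos]
    rw [(claimA _ hmem).deriv, hΦ]
    simp
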